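/- Let σ > 0, β > 0 and 0 < ε < β, and let μ be the Gaussian measure on ℝ with mean 0 and variance σ², whose density is φ_σ(w) = exp(−w²/(2σ²))/(σ√(2π)). Then φ_σ(−β + ε) ≤ (β + 1/β) · (1/σ² + 1/(β − ε)²) · exp((2βε − ε²)/(2σ²)) · μ((−∞, −β]). (Inequality (4.6): the bound C_{2,2} on the local Lipschitz constant of the Gaussian CDF in the non-one-sided case, evaluated at −β + ε.) -/

import Mathlib

open MeasureTheory ProbabilityTheory Set

open Filter

lemma gauss_deriv (σ : ℝ) (hσ : 0 < σ) (w : ℝ) :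
    HasDerivAt (fun w : ℝ => -σ^2 * w / (w^2 + σ^2) *
        (Real.exp (-w^2/(2*σ^2)) / (σ * Real.sqrt (2*Real.pi))))
      ((Real.exp (-w^2/(2*σ^2)) / (σ * Real.sqrt (2*Real.pi))) *
        ((w^4 + 2*σ^2*w^2 - σ^4) / (w^2 + σ^2)^2)) w := by
  have hden : w^2 + σ^2 ≠ 0 := by positivity
  have h1 : HasDerivAt (fun w : ℝ => -σ^2 * w / (w^2 + σ^2))
      ((-σ^2 * (w^2 + σ^2) - (-σ^2 * w) * (2*w)) / (w^2 + σ^2)^2) w := by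
    have hnum : HasDerivAt (fun w : ℝ => -σ^2 * w) (-σ^2) w := by
      simpa using (hasDerivAt_id w).const_mul (-σ^2)
    have hd : HasDerivAt (fun w : ℝ => w^2 + σ^2) (2*w) w := by
      simpa using ((hasDerivAt_pow 2 w).add_const (σ^2))
    exact hnum.div hd hden
  have h2 : HasDerivAt (fun w : ℝ => Real.exp (-w^2/(2*σ^2)) / (σ * Real.sqrt (2*Real.pi)))
      ((Real.exp (-w^2/(2*σ^2)) * (-(2*w)/(2*σ^2))) / (σ * Real.sqrt (2*Real.pi))) w := by
    have hin : HasDerivAt (fun w : ℝ => -w^2/(2*σ^2)) (-(2*w)/(2*σ^2)) w := by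
      have : HasDerivAt (fun w : ℝ => -w^2) (-(2*w)) w := by
        simpa using (hasDerivAt_pow 2 w).fun_neg
      simpa using this.div_const (2*σ^2)
    exact ((Real.hasDerivAt_exp _).comp w hin).div_const _
  have := h1.mul h2
  convert this using 1
  · rfl
  · rfl
  · rfl
  have hsqrt : Real.sqrt (2*Real.pi) ≠ 0 := by positivity
  field_simp
  ring

lemma mills_tail (σ β : ℝ) (hσ : 0 < σ) (hβ : 0 < β) :
    σ^2*β/(β^2+σ^2) * (Real.exp (-β^2/(2*σ^2)) / (σ * Real.sqrt (2*Real.pi))) ≤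
      ∫ x in Set.Iic (-β), Real.exp (-x^2/(2*σ^2)) / (σ * Real.sqrt (2*Real.pi)) := by
  set c := σ * Real.sqrt (2*Real.pi) with hc
  have hcpos : 0 < c := by positivity
  set f : ℝ → ℝ := fun w => Real.exp (-w^2/(2*σ^2)) / c with hf
  set G : ℝ → ℝ := fun w => -σ^2 * w / (w^2 + σ^2) * f w with hG
  set g : ℝ → ℝ := fun w => f w * ((w^4 + 2*σ^2*w^2 - σ^4) / (w^2 + σ^2)^2) with hg
  have hf_cont : Continuous f := ((Real.continuous_exp.comp (by continuity)).div_const c)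
  have hg_cont : Continuous g := by
    refine hf_cont.mul (Continuous.div (by continuity) (by continuity) fun w => by positivity)
  have hf_eq : ∀ w, f w = gaussianPDFReal 0 ⟨σ^2, sq_nonneg σ⟩ w := by
    intro w
    unfold gaussianPDFReal
    simp only [NNReal.coe_mk, sub_zero]
    change f w = (√(2 * Real.pi * σ^2))⁻¹ * Real.exp (-w ^ 2 / (2 * σ^2))
    have hs : Real.sqrt (2 * Real.pi * σ^2) = c := by
      rw [hc, mul_comm σ, Real.sqrt_mul (by positivity), Real.sqrt_sq hσ.le]
    rw [hs]
    simp only [hf]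
    ring
  have hf_int : IntegrableOn f (Set.Iic (-β)) volume := by
    have := (integrable_gaussianPDFReal 0 ⟨σ^2, sq_nonneg σ⟩).restrict
      (s := Set.Iic (-β))
    exact this.congr (ae_of_all _ fun w => (hf_eq w).symm)
  have hf_nonneg : ∀ w, 0 ≤ f w := fun w => by positivity
  have key : ∀ T, β ≤ T → G (-β) - G (-T) ≤ ∫ x in Set.Iic (-β), f x := by
    intro T hT
    have hle : (-T : ℝ) ≤ -β := by linarith
    have hftc : ∫ w in (-T)..(-β), g w = G (-β) - G (-T) := by
      refine intervalIntegral.integral_eq_sub_of_hasDerivAt (fun w _ => ?_)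
        (hg_cont.intervalIntegrable _ _)
      exact gauss_deriv σ hσ w
    have hmono : ∫ w in (-T)..(-β), g w ≤ ∫ w in (-T)..(-β), f w := by
      refine intervalIntegral.integral_mono_on hle (hg_cont.intervalIntegrable _ _)
        (hf_cont.intervalIntegrable _ _) (fun w _ => ?_)
      have hratio : (w^4 + 2*σ^2*w^2 - σ^4) / (w^2 + σ^2)^2 ≤ 1 := by
        rw [div_le_one (by positivity)]
        nlinarith [sq_nonneg σ, sq_nonneg w]
      calc g w ≤ f w * 1 := mul_le_mul_of_nonneg_left hratio (hf_nonneg w)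
        _ = f w := mul_one _
    have hsub : ∫ w in (-T)..(-β), f w ≤ ∫ x in Set.Iic (-β), f x := by
      rw [intervalIntegral.integral_of_le hle]
      refine setIntegral_mono_set hf_int (ae_of_all _ hf_nonneg) ?_
      exact HasSubset.Subset.eventuallyLE (Set.Ioc_subset_Iic_self.trans
        (Set.Iic_subset_Iic.mpr le_rfl))
    linarith [hftc ▸ hmono]
  have hGT0 : Tendsto (fun T : ℝ => G (-T)) atTop (nhds 0) := by
    have hGval : ∀ T : ℝ, G (-T) = σ^2 * T / (T^2 + σ^2) * f (-T) := by
      intro T; simp only [hG, neg_sq]; ring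
    have hexp : Tendsto (fun T : ℝ => σ^2 * (Real.exp (-T^2/(2*σ^2)) / c)) atTop (nhds 0) := by
      have hb : Tendsto (fun T : ℝ => -T^2/(2*σ^2)) atTop atBot := by
        have h2 : Tendsto (fun T : ℝ => T^2) atTop atTop := tendsto_pow_atTop two_ne_zero
        have h3 : Tendsto (fun T : ℝ => T^2 / (2*σ^2)) atTop atTop :=
          h2.atTop_div_const (by positivity)
        exact (tendsto_neg_atTop_atBot.comp h3).congr fun T => by
          simp [Function.comp, neg_div]
      have := Real.tendsto_exp_atBot.comp hb
      have h4 : Tendsto (fun T : ℝ => σ^2 * (Real.exp (-T^2/(2*σ^2)) / c)) atTop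
          (nhds (σ^2 * (0 / c))) := (this.div_const c).const_mul _
      simpa using h4
    refine squeeze_zero' ?_ ?_ hexp
    · filter_upwards [eventually_ge_atTop (0:ℝ)] with T hT
      rw [hGval]
      positivity
    · filter_upwards [eventually_ge_atTop (1:ℝ)] with T hT
      rw [hGval]
      have h1 : σ^2 * T / (T^2 + σ^2) ≤ σ^2 := by
        rw [div_le_iff₀ (by positivity)]
        have hT2 : T ≤ T^2 + σ^2 := by nlinarith
        exact mul_le_mul_of_nonneg_left hT2 (sq_nonneg σ)
      have h2 : f (-T) = Real.exp (-T^2/(2*σ^2))/c := by simp [hf, neg_sq]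
      rw [h2]
      exact mul_le_mul_of_nonneg_right h1 (by positivity)
  have hlim : Tendsto (fun T : ℝ => G (-β) - G (-T)) atTop (nhds (G (-β))) := by
    simpa using (tendsto_const_nhds.sub hGT0)
  have hfinal : G (-β) ≤ ∫ x in Set.Iic (-β), f x := by
    refine le_of_tendsto hlim ?_
    filter_upwards [eventually_ge_atTop β] with T hT using key T hT
  have : G (-β) = σ^2*β/(β^2+σ^2) * (Real.exp (-β^2/(2*σ^2)) / c) := by
    simp only [hG, hf, neg_sq]; ring
  linarith [this ▸ hfinal]


/-- Inequality (4.6): the bound `C_{2,2}` on the local Lipschitz constant of the CDF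
of the Gaussian measure with mean `0` and variance `σ²` in the non-one-sided case: the
density at `-β + ε` is bounded by an explicit constant times `μ((-∞, -β])`. -/
theorem lipschitz_constant_bound_non_one_sided (σ β ε : ℝ) (hσ : 0 < σ) (hβ : 0 < β)
    (hε : 0 < ε) (hεβ : ε < β) :
    Real.exp (-(-β + ε) ^ 2 / (2 * σ ^ 2)) / (σ * Real.sqrt (2 * Real.pi)) ≤
      (β + 1 / β) * (1 / σ ^ 2 + 1 / (β - ε) ^ 2) *
        Real.exp ((2 * β * ε - ε ^ 2) / (2 * σ ^ 2)) *
        ((gaussianReal 0 ⟨σ ^ 2, sq_nonneg σ⟩) (Set.Iic (-β))).toReal := by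
  have hv : (⟨σ^2, sq_nonneg σ⟩ : NNReal) ≠ 0 :=
    fun h => (by positivity : (0:ℝ) < σ^2).ne' (congrArg NNReal.toReal h)
  set c := σ * Real.sqrt (2*Real.pi) with hc
  have hcpos : 0 < c := by positivity
  set φ : ℝ := Real.exp (-β^2/(2*σ^2)) / c with hφ
  set E : ℝ := Real.exp ((2 * β * ε - ε ^ 2) / (2 * σ ^ 2)) with hE
  set C : ℝ := (β + 1 / β) * (1 / σ ^ 2 + 1 / (β - ε) ^ 2) with hC
  set M : ℝ := σ^2*β/(β^2+σ^2) with hM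
  have hMpos : 0 < M := by positivity
  have hEpos : 0 < E := Real.exp_pos _
  have hφpos : 0 < φ := by positivity
  have hCpos : 0 < C := by
    have : 0 < β - ε := by linarith
    positivity
  -- rewrite the measure as an integral
  have hmeas : ((gaussianReal 0 ⟨σ ^ 2, sq_nonneg σ⟩) (Set.Iic (-β))).toReal =
      ∫ x in Set.Iic (-β), Real.exp (-x^2/(2*σ^2)) / c := by
    rw [gaussianReal_apply_eq_integral 0 hv]
    refine (ENNReal.toReal_ofReal (integral_nonneg fun x => gaussianPDFReal_nonneg _ _ x)).trans ?_
    refine integral_congr_ae (ae_of_all _ fun w => ?_)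
    unfold gaussianPDFReal
    simp only [NNReal.coe_mk, sub_zero]
    change (√(2 * Real.pi * σ^2))⁻¹ * Real.exp (-w ^ 2 / (2 * σ^2)) = _
    have hs : Real.sqrt (2 * Real.pi * σ^2) = c := by
      rw [hc, mul_comm σ, Real.sqrt_mul (by positivity), Real.sqrt_sq hσ.le]
    rw [hs]
    ring
  set I : ℝ := ∫ x in Set.Iic (-β), Real.exp (-x^2/(2*σ^2)) / c with hI
  have hmills : M * φ ≤ I := mills_tail σ β hσ hβ
  -- the LHS factors
  have hLHS : Real.exp (-(-β + ε) ^ 2 / (2 * σ ^ 2)) / c = φ * E := by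
    rw [hφ, hE, div_mul_eq_mul_div, ← Real.exp_add]
    congr 1
    field_simp
    ring
  -- the constant inequality
  have hCM : 1 ≤ C * M := by
    have hβε : 0 < β - ε := by linarith
    have h1 : 1/β^2 ≤ 1/(β-ε)^2 := by
      apply one_div_le_one_div_of_le (by positivity)
      nlinarith
    have h2 : (β + 1/β) * (1/σ^2 + 1/β^2) * M = (β^2+1)/β^2 := by
      rw [hM]; field_simp
    calc (1:ℝ) ≤ (β^2+1)/β^2 := by
          rw [le_div_iff₀ (by positivity)]; nlinarith
      _ = (β + 1/β) * (1/σ^2 + 1/β^2) * M := h2.symm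
      _ ≤ C * M := by
          refine mul_le_mul_of_nonneg_right ?_ hMpos.le
          exact mul_le_mul_of_nonneg_left (by linarith) (by positivity)
  have hkey : φ ≤ C * I := by
    calc φ = 1 * φ := (one_mul φ).symm
      _ ≤ (C * M) * φ := mul_le_mul_of_nonneg_right hCM hφpos.le
      _ = C * (M * φ) := by ring
      _ ≤ C * I := mul_le_mul_of_nonneg_left hmills hCpos.le
  rw [hmeas, hLHS]
  calc φ * E ≤ (C * I) * E := mul_le_mul_of_nonneg_right hkey hEpos.le
    _ = C * E * I := by ring
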